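/- Pareto optimality is inherited by prefixes: if Q is a walk from s to t with at most ℓ + 1 edges whose last edge goes from u to t, and Q is Pareto optimal in the set of all walks from s to t with at most ℓ + 1 edges, then its prefix P from s to u is not dominated by any walk from s to u with at most ℓ edges, i.e., P is Pareto optimal in the set of all walks from s to u with at most ℓ edges. -/

import Mathlib

open scoped NNReal

/-- A walk from `s` to `t`: a nonempty list of vertices starting at `s`,
ending at `t`, with `E u v` for every pair of consecutive vertices. -/
def IsWalk {V : Type*} (E : V → V → Prop) (s t : V) (l : List V) : Prop :=
  l ≠ [] ∧ l.head? = some s ∧ l.getLast? = some t ∧ l.Chain' E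

/-- The multi-cost of a walk: componentwise sum of edge weights over
consecutive pairs of vertices (a walk with no edges has cost `0`). -/
def walkCost {V : Type*} {k : ℕ} (w : V → V → Fin k → ℝ≥0) (l : List V) :
    Fin k → ℝ≥0 :=
  ((l.zip l.tail).map fun p => w p.1 p.2).sum

/-- The Pareto front: minimal elements of `S` w.r.t. the product order. -/
def paretoFront {k : ℕ} (S : Set (Fin k → ℝ≥0)) : Set (Fin k → ℝ≥0) :=
  {m | m ∈ S ∧ ¬ ∃ c ∈ S, c < m}


lemma walkCost_cons {V : Type*} {k : ℕ} (w : V → V → Fin k → ℝ≥0)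
    (a b : V) (l : List V) :
    walkCost w (a :: b :: l) = w a b + walkCost w (b :: l) := by
  simp [walkCost]

lemma walkCost_append_singleton {V : Type*} {k : ℕ} (w : V → V → Fin k → ℝ≥0) :
    ∀ (l : List V) (u t : V), l.getLast? = some u →
      walkCost w (l ++ [t]) = walkCost w l + w u t
  | [], u, t, h => by simp at h
  | [a], u, t, h => by
      simp only [List.getLast?_singleton, Option.some.injEq] at h
      subst h
      simp [walkCost]
  | a :: b :: l, u, t, h => by
      have h' : (b :: l).getLast? = some u := by
        rw [List.getLast?_cons_cons] at h; exact h
      have ih := walkCost_append_singleton w (b :: l) u t h'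
      simp only [List.cons_append, walkCost_cons]
      rw [show (b :: l) ++ [t] = b :: (l ++ [t]) from rfl] at ih
      rw [ih]; ring

lemma isWalk_append_singleton {V : Type*} (E : V → V → Prop) {s u t : V}
    {l : List V} (h : IsWalk E s u l) (hE : E u t) :
    IsWalk E s t (l ++ [t]) := by
  obtain ⟨hne, hhd, hlast, hch⟩ := h
  refine ⟨by simp, ?_, by simp, ?_⟩
  · cases l with
    | nil => exact absurd rfl hne
    | cons a l => simpa using hhd
  · apply List.IsChain.append hch (List.isChain_singleton t)
    intro x hx y hy
    simp at hy
    subst hy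
    rw [hlast] at hx
    simp at hx
    subst hx
    exact hE

/-- Pareto optimality is inherited by prefixes: if
`Q = P ++ [t]` has at most `ℓ + 1` edges and is Pareto optimal among walks
from `s` to `t` with at most `ℓ + 1` edges, then its prefix `P` from `s` to
`u` is Pareto optimal among walks from `s` to `u` with at most `ℓ` edges. -/
theorem pareto_optimal_prefix {V : Type*} [Fintype V]
    (E : V → V → Prop) [DecidableRel E] {k : ℕ} (w : V → V → Fin k → ℝ≥0)
    (s u t : V) (ℓ : ℕ) (P Q : List V)
    (hP : IsWalk E s u P) (hE : E u t) (hQ : Q = P ++ [t])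
    (hlen : Q.length - 1 ≤ ℓ + 1)
    (hopt : ¬ ∃ Q' : List V, (IsWalk E s t Q' ∧ Q'.length - 1 ≤ ℓ + 1) ∧
      walkCost w Q' < walkCost w Q) :
    P.length - 1 ≤ ℓ ∧
    ¬ ∃ R : List V, (IsWalk E s u R ∧ R.length - 1 ≤ ℓ) ∧
      walkCost w R < walkCost w P := by
  have hPne : P ≠ [] := hP.1
  have hQlen : Q.length = P.length + 1 := by simp [hQ]
  have hPlen : P.length - 1 ≤ ℓ := by omega
  refine ⟨hPlen, ?_⟩
  rintro ⟨R, ⟨hR, hRlen⟩, hRc⟩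
  have hRne : R ≠ [] := hR.1
  have hRpos : 0 < R.length := List.length_pos_iff.mpr hRne
  apply hopt
  refine ⟨R ++ [t], ⟨isWalk_append_singleton E hR hE, by simp; omega⟩, ?_⟩
  rw [hQ, walkCost_append_singleton w P u t hP.2.2.1,
    walkCost_append_singleton w R u t hR.2.2.1]
  exact add_lt_add_left hRc _
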